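/- arXiv:1302.2829 — 3 statements merged into one kernel-verified Lean document; each statement's English description precedes it below -/
import Mathlib

section
/- (Lemma A.1, second inequality) Let 0 < t < s be real numbers, let θ ∈ ℂ with |θ| ≤ 1/30, let x ∈ ℝ³ and j ∈ {1,2,3}. Then ∑_{λ∈{0,1}} ∫_{{k∈ℝ³ : t ≤ |k| ≤ s}} |G(θ)_j(x,(k,λ))|² / |k| d³k ≤ α³ · min( C_{1,ω}² , C₂² · (s−t) ). -/
open MeasureTheory

noncomputable section

/-- `ℝ³` as a Euclidean space. -/
abbrev R3 : Type := EuclideanSpace ℝ (Fin 3)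

/-- The coupling function `G(θ)(x,(k,λ))`, `j`-th component. -/
def Gfun (α : ℝ) (ε : R3 → Fin 2 → Fin 3 → ℂ) (θ : ℂ)
    (x k : R3) (lam : Fin 2) (j : Fin 3) : ℂ :=
  ((α ^ ((3:ℝ)/2) / (2 * Real.pi) ^ ((3:ℝ)/2) : ℝ) : ℂ) * Complex.exp (-θ) *
    Complex.exp (-(Complex.exp (-(2*θ))) * ((‖k‖ ^ 2 : ℝ) : ℂ)) *
    (((2 * ‖k‖) ^ (-(1:ℝ)/2) : ℝ) : ℂ) *
    Complex.exp (-Complex.I * (α : ℂ) * ((inner ℝ k x : ℝ) : ℂ)) *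
    ε k lam j

/-- The polarization vectors form an a.e. orthonormal transversal family. -/
def Polarization (ε : R3 → Fin 2 → Fin 3 → ℂ) : Prop :=
  Measurable ε ∧
  ∀ᵐ k ∂(volume : Measure R3), k ≠ 0 →
    ∀ lam mu : Fin 2,
      (∑ j : Fin 3, (starRingEnd ℂ) (ε k lam j) * ε k mu j) = (if lam = mu then 1 else 0) ∧
      (∑ j : Fin 3, ((k j : ℝ) : ℂ) * ε k lam j) = 0

def C1 : ℝ := Real.exp (3/4) / (2 * Real.pi)

def C2 : ℝ := Real.sqrt 2 * Real.exp (1/4) / (2 * Real.pi)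

def C1om : ℝ := Real.exp (1/2) * Real.pi ^ ((1:ℝ)/4) / (2 ^ ((1:ℝ)/4) * (2 * Real.pi))

/-! ### Auxiliary lemmas -/

open Metric Set

theorem annulus_radial (t s : ℝ) (ht : 0 < t) (f : ℝ → ℝ) :
    ∫ k in {k : R3 | t ≤ ‖k‖ ∧ ‖k‖ ≤ s}, f ‖k‖ =
      4 * Real.pi * ∫ r in Icc t s, r ^ 2 * f r := by
  have hset : {k : R3 | t ≤ ‖k‖ ∧ ‖k‖ ≤ s} = (fun k : R3 => ‖k‖) ⁻¹' (Icc t s) := rfl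
  have hmeas : MeasurableSet {k : R3 | t ≤ ‖k‖ ∧ ‖k‖ ≤ s} := by
    rw [hset]; exact measurableSet_preimage measurable_norm measurableSet_Icc
  rw [← integral_indicator hmeas]
  have hind : (({k : R3 | t ≤ ‖k‖ ∧ ‖k‖ ≤ s}).indicator (fun k => f ‖k‖)) =
      fun k : R3 => (Icc t s).indicator f ‖k‖ := by
    funext k
    by_cases hk : k ∈ {k : R3 | t ≤ ‖k‖ ∧ ‖k‖ ≤ s}
    · rw [Set.indicator_of_mem hk, Set.indicator_of_mem (Set.mem_Icc.mpr hk)]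
    · rw [Set.indicator_of_notMem hk, Set.indicator_of_notMem
        (fun h => hk (Set.mem_Icc.mp h))]
  rw [hind]
  have := MeasureTheory.integral_fun_norm_addHaar (volume : Measure R3) ((Icc t s).indicator f)
  simp only [show Module.finrank ℝ R3 = 3 from by simp] at this
  rw [this]
  have hvol : (volume (ball (0:R3) 1)).toReal = 4 * Real.pi / 3 := by
    rw [EuclideanSpace.volume_ball]
    have h1 : Real.Gamma ((Fintype.card (Fin 3)) / 2 + 1) = 3/4 * Real.sqrt Real.pi := by
      rw [Fintype.card_fin]
      push_cast
      rw [show (3:ℝ)/2 + 1 = (1/2 + 1) + 1 by ring, Real.Gamma_add_one (by norm_num),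
        Real.Gamma_add_one (by norm_num), Real.Gamma_one_half_eq]
      ring
    rw [h1]
    have hπ := Real.pi_pos
    have : Real.sqrt Real.pi ^ (Fintype.card (Fin 3)) / (3/4 * Real.sqrt Real.pi)
        = 4 * Real.pi / 3 := by
      rw [Fintype.card_fin, show Real.sqrt Real.pi ^ 3 = Real.pi * Real.sqrt Real.pi by
        rw [pow_succ, Real.sq_sqrt hπ.le]]
      have hsπ : Real.sqrt Real.pi ≠ 0 := (Real.sqrt_pos.mpr hπ).ne'
      field_simp
    rw [this]
    simp [ENNReal.toReal_ofReal (by positivity : (0:ℝ) ≤ 4 * Real.pi / 3)]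
  rw [measureReal_def, hvol]
  have h2 : ∫ r in Ioi (0:ℝ), r ^ (3-1) • (Icc t s).indicator f r
      = ∫ r in Icc t s, r ^ 2 * f r := by
    have heq : (fun r : ℝ => r ^ (3-1) • (Icc t s).indicator f r)
        = fun r => (Icc t s).indicator (fun r => r ^ 2 * f r) r := by
      funext r
      by_cases hr : r ∈ Icc t s <;> simp [Set.indicator_apply, hr]
    rw [heq, MeasureTheory.setIntegral_indicator measurableSet_Icc]
    congr 1
    rw [Set.inter_eq_self_of_subset_right]
    intro r hr
    exact Set.mem_Ioi.mpr (lt_of_lt_of_le ht hr.1)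
  rw [h2]
  simp only [nsmul_eq_mul, smul_eq_mul]
  ring

theorem Gabs (α : ℝ) (hα0 : 0 < α) (ε : R3 → Fin 2 → Fin 3 → ℂ) (θ : ℂ) (x k : R3)
    (lam : Fin 2) (j : Fin 3) :
    ‖Gfun α ε θ x k lam j‖ =
      (α ^ ((3:ℝ)/2) / (2 * Real.pi) ^ ((3:ℝ)/2)) * Real.exp (-θ.re) *
      Real.exp (-(Complex.exp (-(2*θ))).re * ‖k‖^2) * ((2 * ‖k‖) ^ (-(1:ℝ)/2)) *
      ‖ε k lam j‖ := by
  have hA : (0:ℝ) ≤ α ^ ((3:ℝ)/2) / (2 * Real.pi) ^ ((3:ℝ)/2) := by positivity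
  have hB : (0:ℝ) ≤ (2 * ‖k‖) ^ (-(1:ℝ)/2) := Real.rpow_nonneg (by positivity) _
  have h1 : |α ^ ((3:ℝ)/2)| = α ^ ((3:ℝ)/2) := abs_of_nonneg (Real.rpow_nonneg hα0.le _)
  have h2 : |(2 * Real.pi) ^ ((3:ℝ)/2)| = (2 * Real.pi) ^ ((3:ℝ)/2) :=
    abs_of_nonneg (Real.rpow_nonneg (by positivity) _)
  simp [Gfun, map_mul, Complex.norm_exp, Complex.norm_real, Real.norm_eq_abs, abs_of_nonneg hA, abs_of_nonneg hB,
    Complex.mul_re, Complex.neg_re, Complex.neg_im, Complex.I_re, Complex.I_im,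
    ← Complex.ofReal_pow, Complex.ofReal_re, Complex.ofReal_im, h1, h2]

theorem rpow_sq_helper (a : ℝ) (ha : 0 ≤ a) : ((a ^ ((3:ℝ)/2)) ^ 2 = a ^ 3)
    ∧ ((a ^ (-(1:ℝ)/2)) ^ 2 = a⁻¹) := by
  constructor
  · rw [← Real.rpow_natCast (a ^ ((3:ℝ)/2)) 2, ← Real.rpow_mul ha]
    norm_num
  · rw [← Real.rpow_natCast (a ^ (-(1:ℝ)/2)) 2, ← Real.rpow_mul ha]
    norm_num
    exact Real.rpow_neg_one a

theorem Gfun_bound (α : ℝ) (hα0 : 0 < α) (ε : R3 → Fin 2 → Fin 3 → ℂ)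
    (θ : ℂ) (hθ : ‖θ‖ ≤ 1/30) (x k : R3) (lam : Fin 2) (j : Fin 3)
    (hk : 0 < ‖k‖) (hε1 : ‖ε k lam j‖ ≤ 1) :
    ‖Gfun α ε θ x k lam j‖ ^ 2 / ‖k‖ ≤
      α ^ 3 * Real.exp (1/15) / (2*Real.pi) ^ 3 * (Real.exp (-‖k‖^2) / (2*‖k‖^2)) := by
  have hA : (0:ℝ) ≤ α ^ ((3:ℝ)/2) / (2 * Real.pi) ^ ((3:ℝ)/2) := by positivity
  have hB : (0:ℝ) ≤ (2 * ‖k‖) ^ (-(1:ℝ)/2) := Real.rpow_nonneg (by positivity) _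
  -- bound on real part of exp(-(2θ))
  have hz : ‖-(2*θ)‖ ≤ 1/15 := by
    rw [norm_neg, norm_mul]
    simp only [Complex.norm_two]
    linarith
  have hre : (1:ℝ)/2 ≤ (Complex.exp (-(2*θ))).re := by
    have h := Complex.norm_exp_sub_one_le (x := -(2*θ)) (le_trans hz (by norm_num))
    have h2 : |(Complex.exp (-(2*θ)) - 1).re| ≤ 2 * (1/15) := by
      refine le_trans (Complex.abs_re_le_norm _) (le_trans h ?_)
      linarith
    have h3 : (Complex.exp (-(2*θ)) - 1).re = (Complex.exp (-(2*θ))).re - 1 := by simp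
    rw [h3, abs_le] at h2
    linarith [h2.1]
  have hθre : -θ.re ≤ 1/30 := le_trans (neg_le_abs _) (le_trans (Complex.abs_re_le_norm _) hθ)
  -- main chain
  have hM : ‖Gfun α ε θ x k lam j‖ ≤
      (α ^ ((3:ℝ)/2) / (2 * Real.pi) ^ ((3:ℝ)/2)) * Real.exp (1/30) *
        Real.exp (-(1/2) * ‖k‖^2) * ((2 * ‖k‖) ^ (-(1:ℝ)/2)) * 1 := by
    rw [Gabs α hα0 ε θ x k lam j]
    have hknn : (0:ℝ) ≤ ‖k‖^2 := by positivity
    gcongr <;>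
      first
        | exact Real.exp_le_exp.mpr hθre
        | (refine Real.exp_le_exp.mpr ?_; nlinarith)
        | exact hε1
  have hMsq : ‖Gfun α ε θ x k lam j‖ ^ 2 ≤
      ((α ^ ((3:ℝ)/2) / (2 * Real.pi) ^ ((3:ℝ)/2)) * Real.exp (1/30) *
        Real.exp (-(1/2) * ‖k‖^2) * ((2 * ‖k‖) ^ (-(1:ℝ)/2)) * 1) ^ 2 :=
    pow_le_pow_left₀ (norm_nonneg _) hM 2
  have hdiv : ‖Gfun α ε θ x k lam j‖ ^ 2 / ‖k‖ ≤
      ((α ^ ((3:ℝ)/2) / (2 * Real.pi) ^ ((3:ℝ)/2)) * Real.exp (1/30) *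
        Real.exp (-(1/2) * ‖k‖^2) * ((2 * ‖k‖) ^ (-(1:ℝ)/2)) * 1) ^ 2 / ‖k‖ := by
    gcongr
  refine le_trans hdiv (le_of_eq ?_)
  have e1 := (rpow_sq_helper α hα0.le).1
  have e2 := (rpow_sq_helper (2*Real.pi) (by positivity)).1
  have e3 := (rpow_sq_helper (2*‖k‖) (by positivity)).2
  have hexp1 : Real.exp (1/30) ^ 2 = Real.exp (1/15) := by
    rw [sq, ← Real.exp_add]; norm_num
  have hexp2 : Real.exp (-(1/2) * ‖k‖^2) ^ 2 = Real.exp (-‖k‖^2) := by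
    rw [sq, ← Real.exp_add]; ring_nf
  rw [mul_pow, mul_pow, mul_pow, mul_pow, div_pow, e1, e2, e3, hexp1, hexp2]
  have hknz : ‖k‖ ≠ 0 := hk.ne'
  field_simp

theorem two_le_e : (2:ℝ) ≤ Real.exp 1 := by linarith [Real.add_one_le_exp 1]

theorem sqrt_e : Real.sqrt (Real.exp 1) = Real.exp (1/2) := by
  rw [show Real.exp 1 = Real.exp (1/2) ^ 2 by rw [sq, ← Real.exp_add]; norm_num]
  exact Real.sqrt_sq (Real.exp_pos _).le

theorem key1 : Real.exp (1/15) * Real.sqrt 2 ≤ Real.exp 1 := by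
  have h1 : Real.exp (1/15) ≤ Real.exp (1/2) := Real.exp_le_exp.mpr (by norm_num)
  have h2 : Real.sqrt 2 ≤ Real.exp (1/2) := by
    rw [← sqrt_e]; exact Real.sqrt_le_sqrt two_le_e
  calc Real.exp (1/15) * Real.sqrt 2 ≤ Real.exp (1/2) * Real.exp (1/2) :=
        mul_le_mul h1 h2 (Real.sqrt_nonneg _) (Real.exp_pos _).le
    _ = Real.exp 1 := by rw [← Real.exp_add]; norm_num

theorem key2 : Real.exp (1/15) ≤ Real.exp (1/2) := Real.exp_le_exp.mpr (by norm_num)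

theorem I_le_diff (t s : ℝ) (ht : 0 < t) (hts : t < s) :
    ∫ r in Icc t s, Real.exp (-r^2) ≤ s - t := by
  have h1 : ∫ r in Icc t s, Real.exp (-r^2) ≤ ∫ r in Icc t s, (1:ℝ) := by
    refine setIntegral_mono_on ?_ ?_ measurableSet_Icc ?_
    · exact (Real.continuous_exp.comp (by continuity)).integrableOn_Icc
    · exact (integrableOn_const_iff (C := (1:ℝ))).mpr (Or.inr (by rw [Real.volume_Icc]; exact ENNReal.ofReal_lt_top))
    · intro r _; exact Real.exp_le_one_iff.mpr (neg_nonpos.mpr (sq_nonneg r))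
  calc _ ≤ ∫ r in Icc t s, (1:ℝ) := h1
    _ = s - t := by
        rw [setIntegral_const, smul_eq_mul, mul_one, measureReal_def, Real.volume_Icc,
          ENNReal.toReal_ofReal (by linarith)]

theorem I_le_gauss (t s : ℝ) (ht : 0 < t) :
    ∫ r in Icc t s, Real.exp (-r^2) ≤ Real.sqrt Real.pi / 2 := by
  have hint : IntegrableOn (fun r : ℝ => Real.exp (-r^2)) (Ioi 0) := by
    have := (integrable_exp_neg_mul_sq (one_pos)).integrableOn (s := Ioi (0:ℝ))
    simpa using this
  have h1 : ∫ r in Icc t s, Real.exp (-r^2) ≤ ∫ r in Ioi (0:ℝ), Real.exp (-r^2) := by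
    refine setIntegral_mono_set hint ?_ ?_
    · exact Filter.Eventually.of_forall fun r => (Real.exp_pos _).le
    · exact HasSubset.Subset.eventuallyLE fun r hr => lt_of_lt_of_le ht hr.1
  have h2 : ∫ r in Ioi (0:ℝ), Real.exp (-r^2) = Real.sqrt Real.pi / 2 := by
    have := integral_gaussian_Ioi 1
    simpa using this
  linarith

theorem C2_sq : C2 ^ 2 = 2 * Real.exp (1/2) / (2 * Real.pi) ^ 2 := by
  rw [C2, div_pow, mul_pow, Real.sq_sqrt (by norm_num : (0:ℝ) ≤ 2), sq, ← Real.exp_add]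
  norm_num

theorem rpow_quarter_sq (a : ℝ) (ha : 0 ≤ a) : (a ^ ((1:ℝ)/4)) ^ 2 = Real.sqrt a := by
  rw [← Real.rpow_natCast (a ^ ((1:ℝ)/4)) 2, ← Real.rpow_mul ha, Real.sqrt_eq_rpow]
  norm_num

theorem C1om_sq : C1om ^ 2 =
    Real.exp 1 * Real.sqrt Real.pi / (Real.sqrt 2 * (2 * Real.pi) ^ 2) := by
  rw [C1om, div_pow, mul_pow, mul_pow, rpow_quarter_sq _ Real.pi_pos.le,
    rpow_quarter_sq _ (by norm_num), sq, ← Real.exp_add]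
  norm_num

theorem eps_le_one (f : Fin 3 → ℂ)
    (h : (∑ j : Fin 3, (starRingEnd ℂ) (f j) * f j) = 1) (j : Fin 3) :
    ‖f j‖ ≤ 1 := by
  have hterm : ∀ w : ℂ, ((starRingEnd ℂ) w * w).re = ‖w‖ ^ 2 := by
    intro w
    rw [Complex.sq_norm, Complex.normSq_apply, Complex.mul_re]
    simp [Complex.conj_re, Complex.conj_im]
  have hsum : (∑ i : Fin 3, ‖f i‖ ^ 2) = 1 := by
    have := congrArg Complex.re h
    rw [Complex.re_sum] at this
    simpa [hterm] using this
  have hle : ‖f j‖ ^ 2 ≤ 1 := by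
    rw [← hsum]
    exact Finset.single_le_sum (fun i _ => sq_nonneg (‖f i‖)) (Finset.mem_univ j)
  nlinarith [norm_nonneg (f j)]

/-- Lemma A.1, second inequality. -/
theorem lemmaA1_second
    (α : ℝ) (hα0 : 0 < α) (hα1 : α ≤ 1)
    (ε : R3 → Fin 2 → Fin 3 → ℂ) (hε : Polarization ε)
    (s t : ℝ) (ht : 0 < t) (hts : t < s)
    (θ : ℂ) (hθ : ‖θ‖ ≤ 1/30)
    (x : R3) (j : Fin 3) :
    (∑ lam : Fin 2, ∫ k in {k : R3 | t ≤ ‖k‖ ∧ ‖k‖ ≤ s},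
        ‖Gfun α ε θ x k lam j‖ ^ 2 / ‖k‖)
      ≤ α ^ 3 * min (C1om ^ 2) (C2 ^ 2 * (s - t)) := by
  obtain ⟨hmeasε, haeε⟩ := hε
  have hπ := Real.pi_pos
  have hmeasA : MeasurableSet {k : R3 | t ≤ ‖k‖ ∧ ‖k‖ ≤ s} :=
    measurableSet_preimage measurable_norm measurableSet_Icc
  -- the dominating radial function
  have hDint : IntegrableOn
      (fun k : R3 => α^3 * Real.exp (1/15) / (2*Real.pi)^3 * (Real.exp (-‖k‖^2) / (2*‖k‖^2)))
      {k : R3 | t ≤ ‖k‖ ∧ ‖k‖ ≤ s} := by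
    have hcomp : IsCompact {k : R3 | t ≤ ‖k‖ ∧ ‖k‖ ≤ s} := by
      refine Metric.isCompact_of_isClosed_isBounded ?_ ?_
      · exact isClosed_Icc.preimage continuous_norm
      · refine (Metric.isBounded_closedBall (x := (0:R3)) (r := s)).subset ?_
        intro k hk
        simpa [Metric.mem_closedBall, dist_eq_norm] using hk.2
    refine ContinuousOn.integrableOn_compact hcomp ?_
    refine ContinuousOn.mul continuousOn_const ?_
    refine ContinuousOn.div ?_ ?_ ?_
    · exact (Real.continuous_exp.comp (by continuity)).continuousOn
    · exact (by continuity : Continuous fun k : R3 => 2*‖k‖^2).continuousOn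
    · intro k hk
      have : 0 < ‖k‖ := lt_of_lt_of_le ht hk.1
      positivity
  -- per-polarization bound
  have hmono : ∀ lam : Fin 2,
      (∫ k in {k : R3 | t ≤ ‖k‖ ∧ ‖k‖ ≤ s},
        ‖Gfun α ε θ x k lam j‖ ^ 2 / ‖k‖) ≤
      ∫ k in {k : R3 | t ≤ ‖k‖ ∧ ‖k‖ ≤ s},
        α^3 * Real.exp (1/15) / (2*Real.pi)^3 * (Real.exp (-‖k‖^2) / (2*‖k‖^2)) := by
    intro lam
    refine integral_mono_of_nonneg
      (Filter.Eventually.of_forall fun k => by positivity) hDint ?_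
    filter_upwards [ae_restrict_of_ae haeε, ae_restrict_mem hmeasA] with k hk hkA
    have hk0 : 0 < ‖k‖ := lt_of_lt_of_le ht hkA.1
    have hkne : k ≠ 0 := by
      intro h; rw [h] at hk0; simp at hk0
    have hε1 : ‖ε k lam j‖ ≤ 1 := by
      have h := (hk hkne lam lam).1
      rw [if_pos rfl] at h
      exact eps_le_one (ε k lam) h j
    exact Gfun_bound α hα0 ε θ hθ x k lam j hk0 hε1
  -- evaluate the dominating integral
  have hDval : (∫ k in {k : R3 | t ≤ ‖k‖ ∧ ‖k‖ ≤ s},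
      α^3 * Real.exp (1/15) / (2*Real.pi)^3 * (Real.exp (-‖k‖^2) / (2*‖k‖^2)))
      = 2 * Real.pi * (α^3 * Real.exp (1/15) / (2*Real.pi)^3) *
        ∫ r in Icc t s, Real.exp (-r^2) := by
    have h := annulus_radial t s ht
      (fun r => α^3 * Real.exp (1/15) / (2*Real.pi)^3 * (Real.exp (-r^2) / (2*r^2)))
    rw [h]
    have h2 : (∫ r in Icc t s,
        r^2 * (α^3 * Real.exp (1/15) / (2*Real.pi)^3 * (Real.exp (-r^2) / (2*r^2))))
        = ∫ r in Icc t s,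
          α^3 * Real.exp (1/15) / (2*Real.pi)^3 / 2 * Real.exp (-r^2) := by
      refine setIntegral_congr_fun measurableSet_Icc fun r hr => ?_
      have hr0 : 0 < r := lt_of_lt_of_le ht hr.1
      field_simp
    rw [h2, MeasureTheory.integral_const_mul]
    ring
  -- sum over the two polarizations
  have hsum : (∑ lam : Fin 2, ∫ k in {k : R3 | t ≤ ‖k‖ ∧ ‖k‖ ≤ s},
        ‖Gfun α ε θ x k lam j‖ ^ 2 / ‖k‖) ≤
      2 * (2 * Real.pi * (α^3 * Real.exp (1/15) / (2*Real.pi)^3) *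
        ∫ r in Icc t s, Real.exp (-r^2)) := by
    rw [Fin.sum_univ_two]
    have h0 := (hmono 0).trans (le_of_eq hDval)
    have h1 := (hmono 1).trans (le_of_eq hDval)
    linarith
  refine hsum.trans ?_
  rw [mul_min_of_nonneg _ _ (by positivity : (0:ℝ) ≤ α^3)]
  refine le_min ?_ ?_
  · -- bound by C1om²
    have hI := I_le_gauss t s ht
    have step1 : 2 * (2 * Real.pi * (α^3 * Real.exp (1/15) / (2*Real.pi)^3) *
        ∫ r in Icc t s, Real.exp (-r^2)) ≤
        2 * (2 * Real.pi * (α^3 * Real.exp (1/15) / (2*Real.pi)^3) *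
          (Real.sqrt Real.pi / 2)) := by
      gcongr
    refine step1.trans ?_
    rw [C1om_sq]
    have key1' : Real.exp (1/15) ≤ Real.exp 1 / Real.sqrt 2 :=
      (le_div_iff₀ (Real.sqrt_pos.mpr two_pos)).mpr key1
    have hs2 : Real.sqrt 2 ≠ 0 := (Real.sqrt_pos.mpr two_pos).ne'
    have heqL : 2 * (2 * Real.pi * (α^3 * Real.exp (1/15) / (2*Real.pi)^3) *
        (Real.sqrt Real.pi / 2))
        = Real.exp (1/15) * (α^3 * Real.sqrt Real.pi / (2*Real.pi)^2) := by
      field_simp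
    have heqR : α^3 * (Real.exp 1 * Real.sqrt Real.pi / (Real.sqrt 2 * (2 * Real.pi) ^ 2))
        = (Real.exp 1 / Real.sqrt 2) * (α^3 * Real.sqrt Real.pi / (2*Real.pi)^2) := by
      field_simp
    rw [heqL, heqR]
    exact mul_le_mul_of_nonneg_right key1' (by positivity)
  · -- bound by C2² (s - t)
    have hI := I_le_diff t s ht hts
    have step1 : 2 * (2 * Real.pi * (α^3 * Real.exp (1/15) / (2*Real.pi)^3) *
        ∫ r in Icc t s, Real.exp (-r^2)) ≤
        2 * (2 * Real.pi * (α^3 * Real.exp (1/15) / (2*Real.pi)^3) * (s - t)) := by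
      gcongr
    refine step1.trans ?_
    rw [C2_sq]
    have heqL : 2 * (2 * Real.pi * (α^3 * Real.exp (1/15) / (2*Real.pi)^3) * (s - t))
        = Real.exp (1/15) * (2 * (α^3 * (s - t) / (2*Real.pi)^2)) := by
      field_simp
    have heqR : α^3 * (2 * Real.exp (1/2) / (2 * Real.pi) ^ 2 * (s - t))
        = Real.exp (1/2) * (2 * (α^3 * (s - t) / (2*Real.pi)^2)) := by
      field_simp
    rw [heqL, heqR]
    refine mul_le_mul_of_nonneg_right key2 ?_
    have hst : (0:ℝ) ≤ s - t := by linarith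
    positivity
end
end

section
/- (Lemma A.1, third inequality) Let s > 0 be real, let θ ∈ ℂ with |θ| ≤ 1/30, let x ∈ ℝ³ and j ∈ {1,2,3}. Then ∑_{λ∈{0,1}} ∫_{{k∈ℝ³ : |k| ≥ s}} |G(θ)_j(x,(k,λ))|² / |k|² d³k ≤ α³ · C₂² · ( |log s| + 1 ), where log is the natural logarithm. -/
open MeasureTheory Set

noncomputable section

lemma point_bound {α : ℝ} (hα0 : 0 < α) {ε : R3 → Fin 2 → Fin 3 → ℂ} {θ : ℂ}
    (hθ : ‖θ‖ ≤ 1/30) (hre : (1:ℝ)/2 ≤ (Complex.exp (-(2*θ))).re)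
    (x k : R3) (lam : Fin 2) (j : Fin 3) (hk : 0 < ‖k‖)
    (hε1 : ‖ε k lam j‖ ^ 2 ≤ 1) :
    ‖Gfun α ε θ x k lam j‖ ^ 2 / ‖k‖ ^ 2 ≤
      α ^ 3 * Real.exp (1/15) / (2 * (2 * Real.pi) ^ 3) * (Real.exp (-‖k‖^2) / ‖k‖^3) := by
  have hπ := Real.pi_pos
  have h2r : (0:ℝ) < 2 * ‖k‖ := by linarith
  have h1 : ‖(↑(α ^ ((3:ℝ)/2) / (2 * Real.pi) ^ ((3:ℝ)/2)) : ℂ)‖ =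
      α ^ ((3:ℝ)/2) / (2 * Real.pi) ^ ((3:ℝ)/2) := by
    rw [Complex.norm_of_nonneg]; positivity
  have h2 : ‖Complex.exp (-θ)‖ = Real.exp (-θ.re) := by
    rw [Complex.norm_exp]; simp
  have h3 : ‖Complex.exp (-(Complex.exp (-(2*θ))) * ((‖k‖^2 : ℝ) : ℂ))‖ =
      Real.exp (-((Complex.exp (-(2*θ))).re * ‖k‖^2)) := by
    rw [Complex.norm_exp]; congr 1; simp [Complex.mul_re, ← Complex.ofReal_pow]
  have h4 : ‖(↑((2 * ‖k‖) ^ (-(1:ℝ)/2)) : ℂ)‖ = (2*‖k‖) ^ (-(1:ℝ)/2) := by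
    rw [Complex.norm_of_nonneg]; positivity
  have h5 : ‖Complex.exp (-Complex.I * (α:ℂ) * ((inner ℝ k x : ℝ) : ℂ))‖ = 1 := by
    rw [Complex.norm_exp]
    norm_num [Complex.mul_re, Complex.mul_im]
  have habs : ‖Gfun α ε θ x k lam j‖ =
      (α ^ ((3:ℝ)/2) / (2 * Real.pi) ^ ((3:ℝ)/2)) * Real.exp (-θ.re) *
      Real.exp (-((Complex.exp (-(2*θ))).re * ‖k‖^2)) * ((2*‖k‖) ^ (-(1:ℝ)/2)) * 1 *
      ‖ε k lam j‖ := by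
    rw [Gfun, norm_mul, norm_mul, norm_mul, norm_mul, norm_mul, h1, h2, h3, h4, h5]
  rw [habs]
  have hP2 : ((α ^ ((3:ℝ)/2) / (2 * Real.pi) ^ ((3:ℝ)/2)))^2 = α^3 / (2*Real.pi)^3 := by
    rw [div_pow, sq, ← Real.rpow_add hα0, sq, ← Real.rpow_add (by positivity),
      show (3:ℝ)/2 + (3:ℝ)/2 = ((3:ℕ):ℝ) by norm_num, Real.rpow_natCast, Real.rpow_natCast]
  have hb2 : ((2*‖k‖) ^ (-(1:ℝ)/2))^2 = (2*‖k‖)⁻¹ := by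
    rw [sq, ← Real.rpow_add h2r, show -(1:ℝ)/2 + -(1:ℝ)/2 = (-1:ℝ) by norm_num,
      Real.rpow_neg_one]
  have hE1 : Real.exp (-θ.re) ^ 2 ≤ Real.exp (1/15) := by
    rw [← Real.exp_nat_mul]
    apply Real.exp_le_exp.2
    have := abs_le.1 ((Complex.abs_re_le_norm θ).trans hθ)
    push_cast; linarith [this.1]
  have hE2 : Real.exp (-((Complex.exp (-(2*θ))).re * ‖k‖^2)) ^ 2 ≤ Real.exp (-‖k‖^2) := by
    rw [← Real.exp_nat_mul]
    apply Real.exp_le_exp.2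
    push_cast
    nlinarith [sq_nonneg ‖k‖]
  calc ((α ^ ((3:ℝ)/2) / (2 * Real.pi) ^ ((3:ℝ)/2)) * Real.exp (-θ.re) *
      Real.exp (-((Complex.exp (-(2*θ))).re * ‖k‖^2)) * ((2*‖k‖) ^ (-(1:ℝ)/2)) * 1 *
      ‖ε k lam j‖)^2 / ‖k‖^2
      = ((α ^ ((3:ℝ)/2) / (2 * Real.pi) ^ ((3:ℝ)/2)))^2 * Real.exp (-θ.re)^2 *
        Real.exp (-((Complex.exp (-(2*θ))).re * ‖k‖^2))^2 * ((2*‖k‖) ^ (-(1:ℝ)/2))^2 *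
        ‖ε k lam j‖^2 / ‖k‖^2 := by ring
    _ ≤ (α^3 / (2*Real.pi)^3) * Real.exp (1/15) * Real.exp (-‖k‖^2) * (2*‖k‖)⁻¹ * 1 / ‖k‖^2 := by
        rw [hP2, hb2]
        gcongr <;> first | exact hE1 | exact hE2 | positivity
    _ = α ^ 3 * Real.exp (1/15) / (2 * (2 * Real.pi) ^ 3) * (Real.exp (-‖k‖^2) / ‖k‖^3) := by
        field_simp

lemma integrableOn_aux (s : ℝ) (hs : 0 < s) :
    IntegrableOn (fun r : ℝ => Real.exp (-r^2) / r) (Ici s) := by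
  set t := max s 1 with ht
  have hst : s ≤ t := le_max_left _ _
  have h1t : (1:ℝ) ≤ t := le_max_right _ _
  have hcont : ContinuousOn (fun r : ℝ => Real.exp (-r^2) / r) (Icc s t) := by
    apply ContinuousOn.div
    · fun_prop
    · fun_prop
    · intro r hr; exact ne_of_gt (lt_of_lt_of_le hs hr.1)
  have hIco : IntegrableOn (fun r : ℝ => Real.exp (-r^2) / r) (Ico s t) :=
    (hcont.integrableOn_compact isCompact_Icc).mono_set Ico_subset_Icc_self
  have hIci : IntegrableOn (fun r : ℝ => Real.exp (-r^2) / r) (Ici t) := by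
    rw [integrableOn_Ici_iff_integrableOn_Ioi]
    apply Integrable.mono' (exp_neg_integrableOn_Ioi t one_pos)
    · apply ContinuousOn.aestronglyMeasurable _ measurableSet_Ioi
      apply ContinuousOn.div
      · fun_prop
      · fun_prop
      · intro r hr; exact ne_of_gt (lt_of_lt_of_le (by linarith : (0:ℝ) < t) hr.out.le)
    · filter_upwards [ae_restrict_mem measurableSet_Ioi] with r hr
      have h1r : (1:ℝ) ≤ r := h1t.trans hr.out.le
      have hr0 : (0:ℝ) < r := by linarith
      rw [Real.norm_eq_abs, abs_of_nonneg (by positivity)]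
      have h1 : Real.exp (-r^2) ≤ Real.exp (-r) := by
        apply Real.exp_le_exp.2; nlinarith
      calc Real.exp (-r^2) / r ≤ Real.exp (-r^2) / 1 := by
            gcongr
        _ = Real.exp (-r^2) := by ring
        _ ≤ Real.exp (-r) := h1
        _ = Real.exp (-1 * r) := by ring_nf
  have := hIco.union hIci
  rwa [Ico_union_Ici_eq_Ici hst] at this

lemma oneD_bound (s : ℝ) (hs : 0 < s) :
    ∫ r in Ici s, Real.exp (-r^2) / r ≤ |Real.log s| + 1/2 := by
  set t := max s 1 with ht
  have hst : s ≤ t := le_max_left _ _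
  have h1t : (1:ℝ) ≤ t := le_max_right _ _
  have ht0 : (0:ℝ) < t := by linarith
  have hcont : ContinuousOn (fun r : ℝ => Real.exp (-r^2) / r) (Icc s t) := by
    apply ContinuousOn.div
    · fun_prop
    · fun_prop
    · intro r hr; exact ne_of_gt (lt_of_lt_of_le hs hr.1)
  have hIco : IntegrableOn (fun r : ℝ => Real.exp (-r^2) / r) (Ico s t) :=
    (hcont.integrableOn_compact isCompact_Icc).mono_set Ico_subset_Icc_self
  have hIci : IntegrableOn (fun r : ℝ => Real.exp (-r^2) / r) (Ici t) :=
    (integrableOn_aux t ht0).mono_set (by rfl)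
  have hsplit : ∫ r in Ici s, Real.exp (-r^2) / r =
      (∫ r in Ico s t, Real.exp (-r^2) / r) + ∫ r in Ici t, Real.exp (-r^2) / r := by
    have hdisj : Disjoint (Ico s t) (Ici t) := by
      apply Set.disjoint_left.2
      intro a ha hb
      exact absurd hb.out (not_le.2 ha.2)
    rw [← setIntegral_union hdisj measurableSet_Ici hIco hIci, Ico_union_Ici_eq_Ici hst]
  have hI1 : (∫ r in Ico s t, Real.exp (-r^2) / r) ≤ |Real.log s| := by
    have hmono : (∫ r in Ico s t, Real.exp (-r^2) / r) ≤ ∫ r in Ico s t, 1 / r := by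
      apply setIntegral_mono_on hIco _ measurableSet_Ico
      · intro r hr
        have hr0 : 0 < r := lt_of_lt_of_le hs hr.1
        gcongr
        · exact Real.exp_le_one_iff.2 (by nlinarith)
      · apply (ContinuousOn.integrableOn_compact isCompact_Icc _).mono_set Ico_subset_Icc_self
        apply ContinuousOn.div continuousOn_const continuousOn_id
        intro r hr; exact ne_of_gt (lt_of_lt_of_le hs hr.1)
    have hval : (∫ r in Ico s t, 1 / r) = Real.log t - Real.log s := by
      rw [integral_Ico_eq_integral_Ioo, ← integral_Ioc_eq_integral_Ioo,
        ← intervalIntegral.integral_of_le hst, integral_one_div, Real.log_div (ne_of_gt ht0) (ne_of_gt hs)]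
      intro h
      rcases h with h
      have := Set.mem_uIcc.1 h
      rcases this with ⟨h1, h2⟩ | ⟨h1, h2⟩ <;> linarith
    have hlog : Real.log t - Real.log s ≤ |Real.log s| := by
      rcases le_total s 1 with h | h
      · have : t = 1 := max_eq_right h
        rw [this, Real.log_one]
        have := Real.log_nonpos hs.le h
        rw [abs_of_nonpos this]; linarith
      · have : t = s := max_eq_left h
        rw [this]; simp [abs_nonneg]
    linarith [hmono, hval ▸ hmono]
  have hI2 : (∫ r in Ici t, Real.exp (-r^2) / r) ≤ 1/2 := by
    have hmono : (∫ r in Ici t, Real.exp (-r^2) / r) ≤ ∫ r in Ici t, Real.exp (-r) := by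
      apply setIntegral_mono_on hIci _ measurableSet_Ici
      · intro r hr
        have h1r : (1:ℝ) ≤ r := h1t.trans hr.out
        have hr0 : (0:ℝ) < r := by linarith
        calc Real.exp (-r^2) / r ≤ Real.exp (-r^2) / 1 := by gcongr
          _ = Real.exp (-r^2) := by ring
          _ ≤ Real.exp (-r) := Real.exp_le_exp.2 (by nlinarith)
      · rw [integrableOn_Ici_iff_integrableOn_Ioi]
        simpa using exp_neg_integrableOn_Ioi t one_pos
    have hval : (∫ r in Ici t, Real.exp (-r)) = Real.exp (-t) := by
      rw [MeasureTheory.integral_Ici_eq_integral_Ioi]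
      have hderiv : ∀ y ∈ Ici t, HasDerivAt (fun u : ℝ => -Real.exp (-u)) (Real.exp (-y)) y := by
        intro y _
        have h := ((hasDerivAt_neg y).exp).neg
        have h2 := h
        simp only [mul_neg, mul_one, neg_neg] at h2
        exact h2
      have hint : IntegrableOn (fun y : ℝ => Real.exp (-y)) (Ioi t) := by
        simpa using exp_neg_integrableOn_Ioi t one_pos
      have htend : Filter.Tendsto (fun u : ℝ => -Real.exp (-u)) Filter.atTop (nhds 0) := by
        rw [show (0:ℝ) = -0 by norm_num]
        exact (Real.tendsto_exp_neg_atTop_nhds_zero.neg)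
      have := integral_Ioi_of_hasDerivAt_of_tendsto' hderiv hint htend
      rw [this]; simp
    have : Real.exp (-t) ≤ 1/2 := by
      have h2 : (2:ℝ) ≤ Real.exp 1 := by
        have := Real.add_one_le_exp 1; linarith
      have h3 : Real.exp (-t) ≤ Real.exp (-1) := Real.exp_le_exp.2 (by linarith)
      have h4 : Real.exp (-1) ≤ 1/2 := by
        rw [Real.exp_neg, inv_le_comm₀ (Real.exp_pos 1) (by norm_num)]
        have he : ((1:ℝ)/2)⁻¹ = 2 := by norm_num
        rw [he]; exact h2
      linarith
    linarith [hval ▸ hmono]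
  linarith [hsplit, hI1, hI2]

lemma exp_re_half {θ : ℂ} (hθ : ‖θ‖ ≤ 1/30) :
    (1:ℝ)/2 ≤ (Complex.exp (-(2*θ))).re := by
  have hre : |θ.re| ≤ 1/30 := (Complex.abs_re_le_norm θ).trans hθ
  have him : |θ.im| ≤ 1/30 := (Complex.abs_im_le_norm θ).trans hθ
  rw [Complex.exp_re]
  have h1 : (-(2*θ)).re = -(2*θ.re) := by simp
  have h2 : (-(2*θ)).im = -(2*θ.im) := by simp
  rw [h1, h2, Real.cos_neg]
  have he : (14:ℝ)/15 ≤ Real.exp (-(2*θ.re)) := by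
    have hle : (-(1:ℝ)/15) ≤ -(2*θ.re) := by
      have := abs_le.1 hre; linarith [this.1, this.2]
    calc (14:ℝ)/15 = (-(1:ℝ)/15) + 1 := by norm_num
    _ ≤ Real.exp (-(1:ℝ)/15) := Real.add_one_le_exp _
    _ ≤ Real.exp (-(2*θ.re)) := Real.exp_le_exp.2 hle
  have hc : (449:ℝ)/450 ≤ Real.cos (2*θ.im) := by
    have h := Real.one_sub_sq_div_two_le_cos (x := 2*θ.im)
    have h2 : (2*θ.im)^2 ≤ (1/15)^2 := by
      have := abs_le.1 him
      nlinarith [this.1, this.2]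
    nlinarith
  nlinarith [Real.exp_pos (-(2*θ.re)), Real.cos_le_one (2*θ.im)]

lemma eps_bound {ε : R3 → Fin 2 → Fin 3 → ℂ} {k : R3} {lam : Fin 2} (j : Fin 3)
    (h : (∑ i : Fin 3, (starRingEnd ℂ) (ε k lam i) * ε k lam i) = 1) :
    ‖ε k lam j‖ ^ 2 ≤ 1 := by
  have hterm : ∀ i, (starRingEnd ℂ) (ε k lam i) * ε k lam i
      = ((‖ε k lam i‖ ^ 2 : ℝ) : ℂ) := by
    intro i
    rw [mul_comm, Complex.mul_conj, Complex.sq_norm]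
  have hsum : (∑ i : Fin 3, ‖ε k lam i‖ ^ 2) = 1 := by
    have h2 := h
    rw [Finset.sum_congr rfl (fun i _ => hterm i), ← Complex.ofReal_sum] at h2
    exact_mod_cast h2
  rw [← hsum]
  exact Finset.single_le_sum (f := fun i => ‖ε k lam i‖ ^ 2)
    (fun i _ => sq_nonneg _) (Finset.mem_univ j)

lemma gauss_integrable : Integrable (fun k : R3 => Real.exp (-‖k‖^2)) := by
  have h := (GaussianFourier.integrable_cexp_neg_mul_sq_norm_add (V := R3) (b := 1)
    (by norm_num) 0 0).norm
  have heq : ∀ k : R3, ‖Complex.exp (-(1:ℂ) * (‖k‖:ℂ)^2 + 0 * (inner ℝ (0:R3) k : ℝ))‖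
      = Real.exp (-‖k‖^2) := by
    intro k
    rw [Complex.norm_exp]
    congr 1
    simp [Complex.mul_re, ← Complex.ofReal_pow]
  simpa only [heq] using h


/-- Lemma A.1, third inequality. -/
theorem lemmaA1_third
    (α : ℝ) (hα0 : 0 < α) (hα1 : α ≤ 1)
    (ε : R3 → Fin 2 → Fin 3 → ℂ) (hε : Polarization ε)
    (s : ℝ) (hs : 0 < s)
    (θ : ℂ) (hθ : ‖θ‖ ≤ 1/30)
    (x : R3) (j : Fin 3) :
    (∑ lam : Fin 2, ∫ k in {k : R3 | s ≤ ‖k‖},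
        ‖Gfun α ε θ x k lam j‖ ^ 2 / ‖k‖ ^ 2)
      ≤ α ^ 3 * C2 ^ 2 * (|Real.log s| + 1) := by
  obtain ⟨hmeas, hae⟩ := hε
  have hπ := Real.pi_pos
  set L := |Real.log s| with hL
  have hL0 : 0 ≤ L := abs_nonneg _
  set A : ℝ := α ^ 3 * Real.exp (1/15) / (2 * (2 * Real.pi) ^ 3) with hA
  have hA0 : 0 ≤ A := by positivity
  set S : Set R3 := {k : R3 | s ≤ ‖k‖} with hS
  have hSmeas : MeasurableSet S := measurableSet_le measurable_const measurable_norm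
  have hre := exp_re_half hθ
  -- the radial majorant
  set g : R3 → ℝ := fun k => A * (Real.exp (-‖k‖^2) / ‖k‖^3) with hg
  have hg_int : IntegrableOn g S := by
    apply Integrable.mono' ((gauss_integrable.const_mul (A / s^3)).integrableOn)
    · exact (((Measurable.comp Real.measurable_exp
        (measurable_norm.pow_const 2).neg).div
        (measurable_norm.pow_const 3)).const_mul A).aestronglyMeasurable
    · filter_upwards [ae_restrict_mem hSmeas] with k hk
      have hks : s ≤ ‖k‖ := hk
      have hk0 : 0 < ‖k‖ := lt_of_lt_of_le hs hks
      rw [Real.norm_eq_abs, abs_of_nonneg (by positivity)]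
      calc g k = A * (Real.exp (-‖k‖^2) / ‖k‖^3) := rfl
        _ ≤ A * (Real.exp (-‖k‖^2) / s^3) := by
            gcongr
        _ = A / s^3 * Real.exp (-‖k‖^2) := by ring
  -- per-λ bound by the radial integral
  have h_each : ∀ lam : Fin 2,
      (∫ k in S, ‖Gfun α ε θ x k lam j‖ ^ 2 / ‖k‖ ^ 2) ≤ ∫ k in S, g k := by
    intro lam
    apply integral_mono_of_nonneg
    · exact Filter.Eventually.of_forall (fun k => by positivity)
    · exact hg_int
    · filter_upwards [ae_restrict_mem hSmeas, ae_restrict_of_ae hae] with k hkS hk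
      have hks : s ≤ ‖k‖ := hkS
      have hk0 : 0 < ‖k‖ := lt_of_lt_of_le hs hks
      have hknz : k ≠ 0 := by
        intro h0
        rw [h0, norm_zero] at hk0
        exact lt_irrefl 0 hk0
      have h1 := (hk hknz lam lam).1
      rw [if_pos rfl] at h1
      exact point_bound hα0 hθ hre x k lam j hk0 (eps_bound j h1)
  -- rewrite the radial integral as an integral of a function of the norm
  set fI : ℝ → ℝ := fun r => Set.indicator (Ici s) (fun r => A * (Real.exp (-r^2) / r^3)) r
    with hfI
  have h_ind : (∫ k in S, g k) = ∫ k : R3, fI ‖k‖ := by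
    rw [← integral_indicator hSmeas]
    apply integral_congr_ae
    apply Filter.Eventually.of_forall
    intro k
    simp only [hfI]
    by_cases hk : s ≤ ‖k‖
    · rw [Set.indicator_of_mem (show k ∈ S from hk),
        Set.indicator_of_mem (show ‖k‖ ∈ Ici s from hk)]
    · rw [Set.indicator_of_notMem (show k ∉ S from hk),
        Set.indicator_of_notMem (show ‖k‖ ∉ Ici s from hk)]
  have h_rad : (∫ k : R3, fI ‖k‖)
      = (3:ℕ) • ((volume : Measure R3) (Metric.ball 0 1)).toReal •
        ∫ y in Set.Ioi (0:ℝ), y ^ 2 • fI y := by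
    simpa [finrank_euclideanSpace, measureReal_def] using
      MeasureTheory.integral_fun_norm_addHaar (volume : Measure R3) fI
  have hVol : ((volume : Measure R3) (Metric.ball 0 1)).toReal = 4 * Real.pi / 3 := by
    rw [EuclideanSpace.volume_ball]
    have h1 : Real.Gamma ((Fintype.card (Fin 3)) / 2 + 1) = 3/4 * Real.sqrt Real.pi := by
      have h32 : ((Fintype.card (Fin 3) : ℝ)) / 2 + 1 = (3/2 : ℝ) + 1 := by norm_num
      rw [h32, Real.Gamma_add_one (by norm_num)]
      have h12 : (3/2 : ℝ) = 1/2 + 1 := by norm_num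
      rw [h12, Real.Gamma_add_one (by norm_num), Real.Gamma_one_half_eq]
      ring
    rw [h1]
    have hsq : Real.sqrt Real.pi ^ 2 = Real.pi := Real.sq_sqrt hπ.le
    have hs0 : 0 < Real.sqrt Real.pi := Real.sqrt_pos.2 hπ
    have h2 : Real.sqrt Real.pi ^ Fintype.card (Fin 3) / (3/4 * Real.sqrt Real.pi)
        = 4 * Real.pi / 3 := by
      simp only [Fintype.card_fin]
      field_simp
      nlinarith [hsq]
    rw [h2]
    simp [ENNReal.toReal_ofReal (by positivity : (0:ℝ) ≤ 4 * Real.pi / 3)]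
  -- bound the 1-dimensional integral
  have h1D : (∫ y in Set.Ioi (0:ℝ), y ^ 2 • fI y) ≤ A * (L + 1/2) := by
    have hind2 : ∀ y : ℝ, y ^ 2 • fI y
        = Set.indicator (Ici s) (fun y => y ^ 2 * (A * (Real.exp (-y^2) / y^3))) y := by
      intro y
      simp only [hfI]
      by_cases hy : y ∈ Ici s
      · rw [Set.indicator_of_mem hy, Set.indicator_of_mem hy, smul_eq_mul]
      · rw [Set.indicator_of_notMem hy, Set.indicator_of_notMem hy, smul_zero]
    have hIs : Set.Ioi (0:ℝ) ∩ Ici s = Ici s := by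
      apply Set.inter_eq_self_of_subset_right
      intro y hy
      exact lt_of_lt_of_le hs hy
    calc (∫ y in Set.Ioi (0:ℝ), y ^ 2 • fI y)
        = ∫ y in Set.Ioi (0:ℝ),
            Set.indicator (Ici s) (fun y => y ^ 2 * (A * (Real.exp (-y^2) / y^3))) y := by
          exact integral_congr_ae (Filter.Eventually.of_forall (fun y => hind2 y))
      _ = ∫ y in Set.Ioi (0:ℝ) ∩ Ici s, y ^ 2 * (A * (Real.exp (-y^2) / y^3)) := by
          rw [setIntegral_indicator measurableSet_Ici]
      _ = ∫ y in Ici s, A * (Real.exp (-y^2) / y) := by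
          rw [hIs]
          apply setIntegral_congr_fun measurableSet_Ici
          intro y hy
          have hy0 : 0 < y := lt_of_lt_of_le hs hy
          field_simp
      _ = A * ∫ y in Ici s, Real.exp (-y^2) / y := by
          rw [integral_const_mul]
      _ ≤ A * (L + 1/2) := by
          apply mul_le_mul_of_nonneg_left _ hA0
          exact oneD_bound s hs
  -- put everything together
  have h_one : ∀ lam : Fin 2,
      (∫ k in S, ‖Gfun α ε θ x k lam j‖ ^ 2 / ‖k‖ ^ 2)
        ≤ 3 * (4 * Real.pi / 3) * (A * (L + 1/2)) := by
    intro lam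
    calc (∫ k in S, ‖Gfun α ε θ x k lam j‖ ^ 2 / ‖k‖ ^ 2)
        ≤ ∫ k in S, g k := h_each lam
      _ = (3:ℕ) • ((volume : Measure R3) (Metric.ball 0 1)).toReal •
            ∫ y in Set.Ioi (0:ℝ), y ^ 2 • fI y := by rw [h_ind, h_rad]
      _ = 3 * ((4 * Real.pi / 3) * ∫ y in Set.Ioi (0:ℝ), y ^ 2 • fI y) := by
          rw [hVol, nsmul_eq_mul, smul_eq_mul]
          norm_num
      _ ≤ 3 * ((4 * Real.pi / 3) * (A * (L + 1/2))) := by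
          apply mul_le_mul_of_nonneg_left _ (by norm_num)
          exact mul_le_mul_of_nonneg_left h1D (by positivity)
      _ = 3 * (4 * Real.pi / 3) * (A * (L + 1/2)) := by ring
  have hsum : (∑ lam : Fin 2, ∫ k in S, ‖Gfun α ε θ x k lam j‖ ^ 2 / ‖k‖ ^ 2)
      ≤ 2 * (3 * (4 * Real.pi / 3) * (A * (L + 1/2))) := by
    rw [show (2:ℝ) * (3 * (4 * Real.pi / 3) * (A * (L + 1/2)))
      = ∑ _lam : Fin 2, 3 * (4 * Real.pi / 3) * (A * (L + 1/2)) by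
        rw [Finset.sum_const, Finset.card_univ, Fintype.card_fin, nsmul_eq_mul]; push_cast; ring]
    exact Finset.sum_le_sum (fun lam _ => h_one lam)
  refine hsum.trans ?_
  -- final numerical comparison
  have hC2 : C2 ^ 2 = Real.exp (1/2) / (2 * Real.pi ^ 2) := by
    rw [C2]
    rw [div_pow, mul_pow, Real.sq_sqrt (by norm_num : (0:ℝ) ≤ 2), sq, ← Real.exp_add]
    norm_num
    ring
  rw [hC2, hA]
  have hexp : Real.exp (1/15) * (L + 1/2) ≤ Real.exp (1/2) * (L + 1) := by
    have h1 : Real.exp (1/15) ≤ Real.exp (1/2) := Real.exp_le_exp.2 (by norm_num)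
    have h2 : L + 1/2 ≤ L + 1 := by linarith
    have h3 : (0:ℝ) < Real.exp (1/15) := Real.exp_pos _
    nlinarith
  have hkey : 2 * (3 * (4 * Real.pi / 3) * (α ^ 3 * Real.exp (1/15) / (2 * (2 * Real.pi) ^ 3) * (L + 1/2)))
      = α ^ 3 / (2 * Real.pi ^ 2) * (Real.exp (1/15) * (L + 1/2)) := by
    field_simp
    ring
  rw [hkey]
  calc α ^ 3 / (2 * Real.pi ^ 2) * (Real.exp (1/15) * (L + 1/2))
      ≤ α ^ 3 / (2 * Real.pi ^ 2) * (Real.exp (1/2) * (L + 1)) := by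
        apply mul_le_mul_of_nonneg_left hexp (by positivity)
    _ = α ^ 3 * (Real.exp (1/2) / (2 * Real.pi ^ 2)) * (L + 1) := by ring

end
end

section
/- (Lemma A.1, fifth inequality) Let 0 < t < s be real numbers, let θ ∈ ℂ with |θ| ≤ 1/30, let x ∈ ℝ³ and j ∈ {1,2,3}. Then ∑_{λ∈{0,1}} ∫_{{k∈ℝ³ : t ≤ |k| ≤ s}} |k| · |G(θ)_j(x,(k,λ))|² d³k ≤ α³ · min( C₁² , C₂² · s²·(s−t) ). -/
open MeasureTheory

noncomputable section

lemma abs_Gfun (α : ℝ) (hα : 0 ≤ α) (ε : R3 → Fin 2 → Fin 3 → ℂ) (θ : ℂ)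
    (x k : R3) (lam : Fin 2) (j : Fin 3) :
    ‖Gfun α ε θ x k lam j‖ =
      (α ^ ((3:ℝ)/2) / (2 * Real.pi) ^ ((3:ℝ)/2)) * Real.exp (-θ.re) *
      Real.exp (-((Complex.exp (-(2*θ))).re * ‖k‖^2)) * ((2*‖k‖) ^ (-(1:ℝ)/2)) *
      ‖ε k lam j‖ := by
  have h2 : ((-(Complex.exp (-(2*θ))) * ((‖k‖^2:ℝ):ℂ)).re)
      = -((Complex.exp (-(2*θ))).re * ‖k‖^2) := by
    simp [Complex.mul_re, ← Complex.ofReal_pow]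
  have h3 : ((-Complex.I * (α:ℂ) * ((inner ℝ k x : ℝ):ℂ)).re) = 0 := by
    simp [Complex.mul_re, Complex.mul_im]
  have hc : (0:ℝ) ≤ α ^ ((3:ℝ)/2) / (2 * Real.pi) ^ ((3:ℝ)/2) := by positivity
  have hr : (0:ℝ) ≤ (2*‖k‖) ^ (-(1:ℝ)/2) := by positivity
  unfold Gfun
  rw [norm_mul, norm_mul, norm_mul, norm_mul, norm_mul, Complex.norm_real, Complex.norm_real,
    Real.norm_eq_abs, Real.norm_eq_abs,
    Complex.norm_exp, Complex.norm_exp, Complex.norm_exp, h2, h3, Real.exp_zero,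
    abs_of_nonneg hc, abs_of_nonneg hr]
  simp

lemma exp_sq (u : ℝ) : Real.exp u ^ 2 = Real.exp (2*u) := by
  rw [sq, ← Real.exp_add]; ring_nf

lemma rpow_three_halves_sq {x : ℝ} (hx : 0 ≤ x) : (x ^ ((3:ℝ)/2))^2 = x^3 := by
  rw [← Real.rpow_natCast (x ^ ((3:ℝ)/2)) 2, ← Real.rpow_mul hx,
    ← Real.rpow_natCast x 3]
  norm_num

lemma pointwise_bound (α : ℝ) (hα : 0 ≤ α) (ε : R3 → Fin 2 → Fin 3 → ℂ) (θ : ℂ)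
    (x k : R3) (lam : Fin 2) (j : Fin 3) (hk : 0 < ‖k‖)
    (hε1 : ‖ε k lam j‖ ≤ 1) :
    ‖k‖ * ‖Gfun α ε θ x k lam j‖ ^ 2 ≤
      α ^ 3 / (2 * Real.pi) ^ 3 * Real.exp (-(2 * θ.re)) / 2 *
        Real.exp (-(2 * (Complex.exp (-(2*θ))).re) * ‖k‖ ^ 2) := by
  have hπ : (0:ℝ) < 2 * Real.pi := by positivity
  rw [abs_Gfun α hα ε θ x k lam j]
  have hc2 : (α ^ ((3:ℝ)/2) / (2*Real.pi) ^ ((3:ℝ)/2))^2 = α^3/(2*Real.pi)^3 := by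
    rw [div_pow, rpow_three_halves_sq hα, rpow_three_halves_sq hπ.le]
  have hr2 : ((2*‖k‖) ^ (-(1:ℝ)/2))^2 = (2*‖k‖)⁻¹ := by
    rw [← Real.rpow_natCast ((2*‖k‖) ^ (-(1:ℝ)/2)) 2, ← Real.rpow_mul (by positivity)]
    norm_num [Real.rpow_neg_one]
  have hA : 0 ≤ ‖ε k lam j‖ := norm_nonneg _
  have key : ‖k‖ * ((α ^ ((3:ℝ)/2) / (2 * Real.pi) ^ ((3:ℝ)/2)) * Real.exp (-θ.re) *
      Real.exp (-((Complex.exp (-(2*θ))).re * ‖k‖^2)) * ((2*‖k‖) ^ (-(1:ℝ)/2)) *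
      ‖ε k lam j‖) ^ 2
      = α ^ 3 / (2 * Real.pi) ^ 3 * Real.exp (-(2 * θ.re)) / 2 *
        Real.exp (-(2 * (Complex.exp (-(2*θ))).re) * ‖k‖ ^ 2) *
        ‖ε k lam j‖ ^ 2 := by
    have e1 : Real.exp (-θ.re) ^ 2 = Real.exp (-(2*θ.re)) := by rw [exp_sq]; ring_nf
    have e2 : Real.exp (-((Complex.exp (-(2*θ))).re * ‖k‖^2)) ^ 2
        = Real.exp (-(2 * (Complex.exp (-(2*θ))).re) * ‖k‖ ^ 2) := by rw [exp_sq]; ring_nf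
    have e3 : ((2*‖k‖) ^ (-(1:ℝ)/2))^2 * ‖k‖ = 1/2 := by
      rw [hr2]; field_simp
    calc ‖k‖ * (_ * Real.exp (-θ.re) * _ * _ * ‖ε k lam j‖) ^ 2
        = (α ^ ((3:ℝ)/2) / (2*Real.pi) ^ ((3:ℝ)/2))^2 * Real.exp (-θ.re) ^ 2 *
          Real.exp (-((Complex.exp (-(2*θ))).re * ‖k‖^2)) ^ 2 *
          (((2*‖k‖) ^ (-(1:ℝ)/2))^2 * ‖k‖) * ‖ε k lam j‖ ^ 2 := by ring
      _ = _ := by rw [hc2, e1, e2, e3]; ring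
  rw [key]
  have hP : 0 ≤ α ^ 3 / (2 * Real.pi) ^ 3 * Real.exp (-(2 * θ.re)) / 2 *
      Real.exp (-(2 * (Complex.exp (-(2*θ))).re) * ‖k‖ ^ 2) := by positivity
  exact mul_le_of_le_one_right hP (by nlinarith)

lemma a_lower (θ : ℂ) (hθ : ‖θ‖ ≤ 1/30) :
    9/10 ≤ (Complex.exp (-(2*θ))).re := by
  have hre : |θ.re| ≤ 1/30 := le_trans (Complex.abs_re_le_norm θ) hθ
  have him : |θ.im| ≤ 1/30 := le_trans (Complex.abs_im_le_norm θ) hθ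
  obtain ⟨hre1, hre2⟩ := abs_le.mp hre
  obtain ⟨him1, him2⟩ := abs_le.mp him
  rw [Complex.exp_re]
  have hre' : (-(2*θ)).re = -(2*θ.re) := by simp
  have him' : (-(2*θ)).im = -(2*θ.im) := by simp
  rw [hre', him']
  have e1 : (14:ℝ)/15 ≤ Real.exp (-(2*θ.re)) := by
    have h1 : (14:ℝ)/15 ≤ Real.exp (-(1/15)) := by
      have := Real.add_one_le_exp (-(1/15):ℝ); linarith
    have h2 : Real.exp (-(1/15)) ≤ Real.exp (-(2*θ.re)) :=
      Real.exp_le_exp.mpr (by linarith)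
    linarith
  have c1 : (449:ℝ)/450 ≤ Real.cos (-(2*θ.im)) := by
    have h1 := Real.one_sub_sq_div_two_le_cos (x := -(2*θ.im))
    nlinarith
  nlinarith [Real.exp_pos (-(2*θ.re))]

lemma E_upper (θ : ℂ) (hθ : ‖θ‖ ≤ 1/30) :
    Real.exp (-(2*θ.re)) ≤ 15/14 := by
  have hre : |θ.re| ≤ 1/30 := le_trans (Complex.abs_re_le_norm θ) hθ
  obtain ⟨hre1, hre2⟩ := abs_le.mp hre
  have h0 : Real.exp (-(2*θ.re)) ≤ Real.exp (1/15) := Real.exp_le_exp.mpr (by linarith)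
  have h1 : Real.exp (1/15) * Real.exp (-(1/15)) = 1 := by rw [← Real.exp_add]; norm_num
  have h2 : (14:ℝ)/15 ≤ Real.exp (-(1/15)) := by
    have := Real.add_one_le_exp (-(1/15):ℝ); linarith
  nlinarith [Real.exp_pos ((1:ℝ)/15)]

lemma integrable_gauss (b : ℝ) (hb : 0 < b) :
    Integrable (fun k : R3 => Real.exp (-b * ‖k‖^2)) := by
  have h := GaussianFourier.integrable_cexp_neg_mul_sq_norm_add (V := R3)
    (b := (b:ℂ)) (by simpa using hb) 0 0
  have h2 := h.norm
  apply h2.congr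
  filter_upwards with k
  simp [Complex.norm_exp, ← Complex.ofReal_pow]

lemma integral_gauss (b : ℝ) (hb : 0 < b) :
    ∫ k : R3, Real.exp (-b * ‖k‖^2) = (Real.pi/b) ^ ((3:ℝ)/2) := by
  have h := GaussianFourier.integral_rexp_neg_mul_sq_norm (V := R3) hb
  simpa using h

lemma shell_eq (s t : ℝ) :
    {k : R3 | t ≤ ‖k‖ ∧ ‖k‖ ≤ s} = Metric.closedBall (0:R3) s \ Metric.ball 0 t := by
  ext k
  simp only [Set.mem_setOf_eq, Set.mem_diff, Metric.mem_closedBall, Metric.mem_ball,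
    dist_zero_right, not_lt]
  tauto

lemma gamma_52 : Real.Gamma ((3:ℝ)/2 + 1) = 3/4 * Real.sqrt Real.pi := by
  rw [Real.Gamma_add_one (by norm_num), show ((3:ℝ)/2) = 1/2 + 1 by norm_num,
    Real.Gamma_add_one (by norm_num), Real.Gamma_one_half_eq]
  ring

lemma vol_cb (r : ℝ) (hr : 0 ≤ r) :
    (volume (Metric.closedBall (0:R3) r)).toReal = Real.pi * (4/3) * r^3 := by
  rw [EuclideanSpace.volume_closedBall]
  have hc : Real.sqrt Real.pi ^ Fintype.card (Fin 3) /
      Real.Gamma (Fintype.card (Fin 3) / 2 + 1) = 4 * Real.pi / 3 := by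
    simp only [Fintype.card_fin]
    rw [show ((3:ℕ):ℝ)/2 + 1 = (3:ℝ)/2 + 1 by norm_num, gamma_52]
    have h2 : Real.sqrt Real.pi ^ 3 = Real.pi * Real.sqrt Real.pi := by
      rw [pow_succ, Real.sq_sqrt Real.pi_pos.le]
    rw [h2]
    have h3 : Real.sqrt Real.pi ≠ 0 := ne_of_gt (Real.sqrt_pos.mpr Real.pi_pos)
    field_simp
  rw [hc, ENNReal.toReal_mul, ENNReal.toReal_pow, ENNReal.toReal_ofReal hr,
    ENNReal.toReal_ofReal (by positivity)]
  simp only [Fintype.card_fin]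
  ring

lemma vol_ball_t (r : ℝ) (hr : 0 ≤ r) :
    (volume (Metric.ball (0:R3) r)).toReal = Real.pi * (4/3) * r^3 := by
  rw [EuclideanSpace.volume_ball]
  have hc : Real.sqrt Real.pi ^ Fintype.card (Fin 3) /
      Real.Gamma (Fintype.card (Fin 3) / 2 + 1) = 4 * Real.pi / 3 := by
    simp only [Fintype.card_fin]
    rw [show ((3:ℕ):ℝ)/2 + 1 = (3:ℝ)/2 + 1 by norm_num, gamma_52]
    have h2 : Real.sqrt Real.pi ^ 3 = Real.pi * Real.sqrt Real.pi := by
      rw [pow_succ, Real.sq_sqrt Real.pi_pos.le]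
    rw [h2]
    have h3 : Real.sqrt Real.pi ≠ 0 := ne_of_gt (Real.sqrt_pos.mpr Real.pi_pos)
    field_simp
  rw [hc, ENNReal.toReal_mul, ENNReal.toReal_pow, ENNReal.toReal_ofReal hr,
    ENNReal.toReal_ofReal (by positivity)]
  simp only [Fintype.card_fin]
  ring

lemma vol_shell (s t : ℝ) (ht : 0 < t) (hts : t < s) :
    (volume ({k : R3 | t ≤ ‖k‖ ∧ ‖k‖ ≤ s})).toReal ≤ 4 * Real.pi * s^2 * (s-t) := by
  rw [shell_eq]
  have hsub : Metric.ball (0:R3) t ⊆ Metric.closedBall 0 s :=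
    le_trans Metric.ball_subset_closedBall (Metric.closedBall_subset_closedBall hts.le)
  have hfin : volume (Metric.ball (0:R3) t) ≠ ⊤ :=
    ne_of_lt ((Metric.isBounded_ball).measure_lt_top)
  have hfin2 : volume (Metric.closedBall (0:R3) s) ≠ ⊤ :=
    ne_of_lt ((Metric.isBounded_closedBall).measure_lt_top)
  rw [measure_diff hsub measurableSet_ball.nullMeasurableSet hfin,
    ENNReal.toReal_sub_of_le (measure_mono hsub) hfin2,
    vol_cb s (by linarith), vol_ball_t t ht.le]
  nlinarith [mul_nonneg (mul_nonneg Real.pi_pos.le (sq_nonneg (s-t))) (by linarith : (0:ℝ) ≤ 2*s+t)]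

lemma v32_bound (b : ℝ) (hb : 9/5 ≤ b) : (Real.pi/b) ^ ((3:ℝ)/2) ≤ 10/3 := by
  have hb0 : (0:ℝ) < b := by linarith
  have hπ4 : Real.pi ≤ 4 := by linarith [Real.pi_lt_d2]
  have hv : Real.pi / b ≤ 20/9 := by
    rw [div_le_div_iff₀ hb0 (by norm_num)]
    nlinarith
  have hv0 : 0 ≤ Real.pi / b := by positivity
  have h1 : (Real.pi/b) ^ ((3:ℝ)/2) ≤ (20/9:ℝ) ^ ((3:ℝ)/2) :=
    Real.rpow_le_rpow hv0 hv (by norm_num)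
  have h2 : ((20/9:ℝ) ^ ((3:ℝ)/2))^2 = (20/9:ℝ)^3 := rpow_three_halves_sq (by norm_num)
  have h3 : 0 ≤ ((20/9:ℝ) ^ ((3:ℝ)/2)) := Real.rpow_nonneg (by norm_num) _
  nlinarith

lemma numA (α E v : ℝ) (hα3 : 0 ≤ α^3) (hE : E ≤ 15/14) (hE0 : 0 ≤ E)
    (hv : v ≤ 10/3) (hv0 : 0 ≤ v) :
    2 * ((α ^ 3 / (2 * Real.pi) ^ 3 * E / 2) * v) ≤ α ^ 3 * C1^2 := by
  have hC1sq : C1^2 = Real.exp (3/2) / (2 * Real.pi)^2 := by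
    rw [C1, div_pow, sq (Real.exp (3/4)), ← Real.exp_add]
    norm_num
  have hπ3 : (3:ℝ) < Real.pi := Real.pi_gt_three
  have hexp32 : (5:ℝ)/2 ≤ Real.exp (3/2) := by
    have := Real.add_one_le_exp ((3:ℝ)/2); linarith
  have hEv : E * v ≤ 25/7 := le_trans (mul_le_mul hE hv hv0 (by norm_num)) (by norm_num)
  have hdiv : (25:ℝ)/7 / (2*Real.pi)^3 ≤ Real.exp (3/2) / (2*Real.pi)^2 := by
    rw [div_le_div_iff₀ (by positivity) (by positivity)]
    nlinarith [mul_nonneg (by linarith : (0:ℝ) ≤ Real.pi - 3) (sq_nonneg Real.pi),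
      mul_nonneg (by linarith : (0:ℝ) ≤ Real.exp (3/2) - 5/2)
        (pow_nonneg Real.pi_pos.le 3)]
  calc 2 * ((α ^ 3 / (2 * Real.pi) ^ 3 * E / 2) * v)
      = α^3 * ((E * v) / (2*Real.pi)^3) := by ring
    _ ≤ α^3 * ((25/7) / (2*Real.pi)^3) := by gcongr
    _ ≤ α^3 * (Real.exp (3/2) / (2*Real.pi)^2) := mul_le_mul_of_nonneg_left hdiv hα3
    _ = α^3 * C1^2 := by rw [hC1sq]

lemma numB (α E s t : ℝ) (hα3 : 0 ≤ α^3) (hE : E ≤ 15/14) (hE0 : 0 ≤ E)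
    (ht : 0 < t) (hts : t < s) :
    2 * ((α ^ 3 / (2 * Real.pi) ^ 3 * E / 2) * (4 * Real.pi * s^2 * (s-t)))
      ≤ α ^ 3 * (C2^2 * s^2 * (s-t)) := by
  have hC2sq : C2^2 = 2 * Real.exp (1/2) / (2 * Real.pi)^2 := by
    rw [C2, div_pow, mul_pow, Real.sq_sqrt (by norm_num : (0:ℝ) ≤ 2),
      sq (Real.exp (1/4)), ← Real.exp_add]
    norm_num
  have hexp12 : (3:ℝ)/2 ≤ Real.exp (1/2) := by
    have := Real.add_one_le_exp ((1:ℝ)/2); linarith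
  have hfac : (0:ℝ) ≤ s^2 * (s-t) := by nlinarith [sq_nonneg s]
  have hdiv : E * (4*Real.pi) / (2*Real.pi)^3 ≤ 2 * Real.exp (1/2) / (2*Real.pi)^2 := by
    rw [div_le_div_iff₀ (by positivity) (by positivity)]
    nlinarith [mul_nonneg (by linarith : (0:ℝ) ≤ Real.exp (1/2) - E)
      (pow_nonneg Real.pi_pos.le 3)]
  calc 2 * ((α ^ 3 / (2 * Real.pi) ^ 3 * E / 2) * (4 * Real.pi * s^2 * (s-t)))
      = α^3 * (E * (4*Real.pi) / (2*Real.pi)^3) * (s^2*(s-t)) := by ring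
    _ ≤ α^3 * (2 * Real.exp (1/2) / (2*Real.pi)^2) * (s^2*(s-t)) :=
        mul_le_mul_of_nonneg_right (mul_le_mul_of_nonneg_left hdiv hα3) hfac
    _ = α^3 * (C2^2 * s^2 * (s-t)) := by rw [hC2sq]; ring


/-- Lemma A.1, fifth inequality. -/
theorem lemmaA1_fifth
    (α : ℝ) (hα0 : 0 < α) (hα1 : α ≤ 1)
    (ε : R3 → Fin 2 → Fin 3 → ℂ) (hε : Polarization ε)
    (s t : ℝ) (ht : 0 < t) (hts : t < s)
    (θ : ℂ) (hθ : ‖θ‖ ≤ 1/30)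
    (x : R3) (j : Fin 3) :
    (∑ lam : Fin 2, ∫ k in {k : R3 | t ≤ ‖k‖ ∧ ‖k‖ ≤ s},
        ‖k‖ * ‖Gfun α ε θ x k lam j‖ ^ 2)
      ≤ α ^ 3 * min (C1 ^ 2) (C2 ^ 2 * s ^ 2 * (s - t)) := by
  have ha : 9/10 ≤ (Complex.exp (-(2*θ))).re := a_lower θ hθ
  have hE : Real.exp (-(2*θ.re)) ≤ 15/14 := E_upper θ hθ
  have hE0 : 0 < Real.exp (-(2*θ.re)) := Real.exp_pos _
  have hb0 : (0:ℝ) < 2 * (Complex.exp (-(2*θ))).re := by linarith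
  have hα3 : (0:ℝ) ≤ α^3 := by positivity
  have hSm : MeasurableSet {k : R3 | t ≤ ‖k‖ ∧ ‖k‖ ≤ s} := by
    rw [shell_eq]
    exact measurableSet_closedBall.diff measurableSet_ball
  have hSfin : volume {k : R3 | t ≤ ‖k‖ ∧ ‖k‖ ≤ s} < ⊤ := by
    rw [shell_eq]
    exact lt_of_le_of_lt (measure_mono Set.diff_subset)
      (Metric.isBounded_closedBall).measure_lt_top
  have hHint : Integrable (fun k : R3 =>
      α ^ 3 / (2 * Real.pi) ^ 3 * Real.exp (-(2 * θ.re)) / 2 *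
        Real.exp (-(2 * (Complex.exp (-(2*θ))).re) * ‖k‖^2)) :=
    (integrable_gauss _ hb0).const_mul _
  have key : ∀ lam : Fin 2,
      (∫ k in {k : R3 | t ≤ ‖k‖ ∧ ‖k‖ ≤ s},
          ‖k‖ * ‖Gfun α ε θ x k lam j‖ ^ 2)
        ≤ ∫ k in {k : R3 | t ≤ ‖k‖ ∧ ‖k‖ ≤ s},
            α ^ 3 / (2 * Real.pi) ^ 3 * Real.exp (-(2 * θ.re)) / 2 *
              Real.exp (-(2 * (Complex.exp (-(2*θ))).re) * ‖k‖^2) := by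
    intro lam
    apply integral_mono_of_nonneg
    · filter_upwards with k; positivity
    · exact hHint.integrableOn
    · filter_upwards [ae_restrict_of_ae hε.2, ae_restrict_mem hSm] with k hk hkS
      have hk0 : 0 < ‖k‖ := lt_of_lt_of_le ht hkS.1
      have hkne : k ≠ 0 := by
        intro h; rw [h] at hk0; simp at hk0
      have hsum := (hk hkne lam lam).1
      simp only [eq_self_iff_true, if_true] at hsum
      have hns : ∑ j', Complex.normSq (ε k lam j') = 1 := by
        have hc : ((∑ j', Complex.normSq (ε k lam j') : ℝ) : ℂ) = 1 := by
          push_cast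
          rw [← hsum]
          refine Finset.sum_congr rfl fun i _ => ?_
          rw [mul_comm, Complex.mul_conj]
        exact_mod_cast hc
      have hle : Complex.normSq (ε k lam j) ≤ 1 := by
        rw [← hns]
        exact Finset.single_le_sum (fun i _ => Complex.normSq_nonneg _) (Finset.mem_univ j)
      have hε1 : ‖ε k lam j‖ ≤ 1 := by
        have h1 := Complex.sq_norm (ε k lam j)
        nlinarith [norm_nonneg (ε k lam j)]
      exact pointwise_bound α hα0.le ε θ x k lam j hk0 hε1
  have hsum_le : (∑ lam : Fin 2, ∫ k in {k : R3 | t ≤ ‖k‖ ∧ ‖k‖ ≤ s},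
        ‖k‖ * ‖Gfun α ε θ x k lam j‖ ^ 2)
      ≤ 2 * ∫ k in {k : R3 | t ≤ ‖k‖ ∧ ‖k‖ ≤ s},
            α ^ 3 / (2 * Real.pi) ^ 3 * Real.exp (-(2 * θ.re)) / 2 *
              Real.exp (-(2 * (Complex.exp (-(2*θ))).re) * ‖k‖^2) := by
    rw [Fin.sum_univ_two]
    have h0 := key 0
    have h1 := key 1
    linarith
  have hIA : (∫ k in {k : R3 | t ≤ ‖k‖ ∧ ‖k‖ ≤ s},
        α ^ 3 / (2 * Real.pi) ^ 3 * Real.exp (-(2 * θ.re)) / 2 *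
          Real.exp (-(2 * (Complex.exp (-(2*θ))).re) * ‖k‖^2))
      ≤ (α ^ 3 / (2 * Real.pi) ^ 3 * Real.exp (-(2 * θ.re)) / 2) *
          (Real.pi/(2 * (Complex.exp (-(2*θ))).re)) ^ ((3:ℝ)/2) := by
    have h1 := setIntegral_le_integral (s := {k : R3 | t ≤ ‖k‖ ∧ ‖k‖ ≤ s}) hHint
      (by filter_upwards with k; positivity)
    have h2 : (∫ k : R3, α ^ 3 / (2 * Real.pi) ^ 3 * Real.exp (-(2 * θ.re)) / 2 *
          Real.exp (-(2 * (Complex.exp (-(2*θ))).re) * ‖k‖^2))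
        = (α ^ 3 / (2 * Real.pi) ^ 3 * Real.exp (-(2 * θ.re)) / 2) *
          (Real.pi/(2 * (Complex.exp (-(2*θ))).re)) ^ ((3:ℝ)/2) := by
      rw [integral_const_mul, integral_gauss _ hb0]
    linarith
  have hIB : (∫ k in {k : R3 | t ≤ ‖k‖ ∧ ‖k‖ ≤ s},
        α ^ 3 / (2 * Real.pi) ^ 3 * Real.exp (-(2 * θ.re)) / 2 *
          Real.exp (-(2 * (Complex.exp (-(2*θ))).re) * ‖k‖^2))
      ≤ (α ^ 3 / (2 * Real.pi) ^ 3 * Real.exp (-(2 * θ.re)) / 2) *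
          (4 * Real.pi * s^2 * (s-t)) := by
    have hD0 : (0:ℝ) ≤ α ^ 3 / (2 * Real.pi) ^ 3 * Real.exp (-(2 * θ.re)) / 2 := by
      positivity
    have h1 : (∫ k in {k : R3 | t ≤ ‖k‖ ∧ ‖k‖ ≤ s},
          α ^ 3 / (2 * Real.pi) ^ 3 * Real.exp (-(2 * θ.re)) / 2 *
            Real.exp (-(2 * (Complex.exp (-(2*θ))).re) * ‖k‖^2))
        ≤ (α ^ 3 / (2 * Real.pi) ^ 3 * Real.exp (-(2 * θ.re)) / 2) *
            (volume {k : R3 | t ≤ ‖k‖ ∧ ‖k‖ ≤ s}).toReal := by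
      have h2 := norm_setIntegral_le_of_norm_le_const (μ := volume)
        (C := α ^ 3 / (2 * Real.pi) ^ 3 * Real.exp (-(2 * θ.re)) / 2) hSfin
        (f := fun k : R3 => α ^ 3 / (2 * Real.pi) ^ 3 * Real.exp (-(2 * θ.re)) / 2 *
          Real.exp (-(2 * (Complex.exp (-(2*θ))).re) * ‖k‖^2)) ?_
      · exact le_trans (le_abs_self _) (by rw [← Real.norm_eq_abs]; exact h2)
      · intro k _
        show ‖α ^ 3 / (2 * Real.pi) ^ 3 * Real.exp (-(2 * θ.re)) / 2 *
          Real.exp (-(2 * (Complex.exp (-(2*θ))).re) * ‖k‖^2)‖ ≤ _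
        rw [Real.norm_eq_abs, abs_of_nonneg (by positivity)]
        have h4 : Real.exp (-(2 * (Complex.exp (-(2*θ))).re) * ‖k‖^2) ≤ 1 :=
          Real.exp_le_one_iff.mpr (by nlinarith [sq_nonneg ‖k‖])
        exact mul_le_of_le_one_right hD0 h4
    have h3 := mul_le_mul_of_nonneg_left (vol_shell s t ht hts) hD0
    linarith
  rw [mul_min_of_nonneg _ _ hα3]
  apply le_min
  · refine le_trans hsum_le (le_trans (by linarith) (numA α (Real.exp (-(2*θ.re)))
      ((Real.pi/(2 * (Complex.exp (-(2*θ))).re)) ^ ((3:ℝ)/2)) hα3 hE hE0.le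
      (v32_bound _ (by linarith)) (Real.rpow_nonneg (by positivity) _)))
  · refine le_trans hsum_le (le_trans (by linarith) (numB α (Real.exp (-(2*θ.re)))
      s t hα3 hE hE0.le ht hts))


end
end
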